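/- Let S and R be positive integers with S ≤ R, and let P be a natural number with P < S. Then ⌈S·⌊R·P/S⌋ / R⌉ = P. -/
import Mathlib


/-- Recovery of a hidden-ring coefficient from its Barrett parameter: for `P < S ≤ R`,
one has `⌈S·⌊R·P/S⌋ / R⌉ = P`. -/
theorem stmt_5 (S R P : ℕ) (hS : 0 < S) (hR : 0 < R) (hSR : S ≤ R) (hP : P < S) :
    ⌈((S * (R * P / S) : ℕ) : ℚ) / (R : ℚ)⌉ = (P : ℤ) := by
  have hRQ : (0 : ℚ) < (R : ℚ) := by exact_mod_cast hR
  have hdm := Nat.div_add_mod (R * P) S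
  have hmod : R * P % S < S := Nat.mod_lt _ hS
  have k1 : R * P < S * (R * P / S) + R := by
    calc R * P = S * (R * P / S) + R * P % S := (Nat.div_add_mod (R * P) S).symm
      _ < S * (R * P / S) + R :=
        Nat.add_lt_add_left (lt_of_lt_of_le (Nat.mod_lt _ hS) hSR) _
  have k2 : S * (R * P / S) ≤ R * P := by
    rw [mul_comm S (R * P / S)]
    exact Nat.div_mul_le_self _ _
  have k1q : (R : ℚ) * P < S * (R * P / S : ℕ) + R := by exact_mod_cast k1
  have k2q : (S : ℚ) * (R * P / S : ℕ) ≤ R * P := by exact_mod_cast k2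
  rw [Int.ceil_eq_iff]
  constructor
  · rw [lt_div_iff₀ hRQ]
    push_cast
    linarith
  · rw [div_le_iff₀ hRQ]
    push_cast
    linarith
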